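/- Conversely to the subsidy upper bound: there exists a nonnegative subsidy vector s ∈ ℝ^A_{≥0} with Σ_{a∈A} s_a equal to the Subset Instability I(u, X, τ, A) such that (X, τ + s) is stable. Hence Subset Instability equals the minimum total stabilizing subsidy. -/

import Mathlib

set_option linter.unusedSectionVars false
set_option maxHeartbeats 1000000


open Finset

/-- A two-sided market: agents `A` partitioned into customers `M` and providers `W`. -/
structure TwoSidedMarket (A : Type*) [Fintype A] [DecidableEq A] where
  M : Finset A
  W : Finset A
  disj : Disjoint M W
  cover : M ∪ W = Finset.univ

variable {A : Type*} [Fintype A] [DecidableEq A]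

/-- `μ` is (the partner map of) a matching on the subset `S` of agents:
it is an involution, agents outside `S` are unmatched, and matched pairs cross sides. -/
def IsMatchingOn (Mkt : TwoSidedMarket A) (S : Finset A) (μ : A → A) : Prop :=
  (∀ a, μ (μ a) = a) ∧ (∀ a, μ a ≠ a → a ∈ S) ∧
  (∀ a, μ a ≠ a → (a ∈ Mkt.M ∧ μ a ∈ Mkt.W) ∨ (a ∈ Mkt.W ∧ μ a ∈ Mkt.M))

/-- Transfers `τ` are zero-sum for the matching `μ`. -/
def ZeroSum (μ : A → A) (τ : A → ℝ) : Prop :=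
  (∀ a, μ a ≠ a → τ a + τ (μ a) = 0) ∧ (∀ a, μ a = a → τ a = 0)

/-- Stability of the market outcome `(μ, τ)` with respect to utilities `u`:
individual rationality and no blocking pairs. -/
def Stable (Mkt : TwoSidedMarket A) (u : A → A → ℝ) (μ : A → A) (τ : A → ℝ) : Prop :=
  (∀ a, 0 ≤ u a (μ a) + τ a) ∧
  (∀ m ∈ Mkt.M, ∀ w ∈ Mkt.W,
    u m w + u w m ≤ (u m (μ m) + τ m) + (u w (μ w) + τ w))

/-- Maximum total utility of a matching on the subset `S`. -/
noncomputable def maxWeight (Mkt : TwoSidedMarket A) (u : A → A → ℝ) (S : Finset A) : ℝ :=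
  sSup {x | ∃ μ, IsMatchingOn Mkt S μ ∧ x = ∑ a ∈ S, u a (μ a)}

/-- Subset Instability of the market outcome `(μ, τ)` with respect to utilities `u`. -/
noncomputable def instability (Mkt : TwoSidedMarket A) (u : A → A → ℝ)
    (μ : A → A) (τ : A → ℝ) : ℝ :=
  sSup {x | ∃ S : Finset A, x = maxWeight Mkt u S - ∑ a ∈ S, (u a (μ a) + τ a)}

lemma sum_comp_involution (S : Finset A) (ν : A → A)
    (hinv : ∀ a, ν (ν a) = a) (hS : ∀ a, ν a ≠ a → a ∈ S) (G : A → ℝ) :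
    ∑ a ∈ S, G (ν a) = ∑ a ∈ S, G a := by
  have hmem : ∀ a ∈ S, ν a ∈ S := by
    intro a ha
    by_cases h : ν a = a
    · rwa [h]
    · exact hS (ν a) (by rw [hinv a]; intro h'; exact h h'.symm)
  exact Finset.sum_nbij' (i := ν) (j := ν) hmem hmem (fun a _ => hinv a) (fun a _ => hinv a)
    (fun a _ => rfl)

lemma matching_sum_le (Mkt : TwoSidedMarket A) (u : A → A → ℝ) (q : A → ℝ)
    (hq : ∀ a, 0 ≤ q a) (hu : ∀ a, u a a = 0)
    (hblock : ∀ m ∈ Mkt.M, ∀ w ∈ Mkt.W, u m w + u w m ≤ q m + q w)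
    (S : Finset A) (ν : A → A) (hν : IsMatchingOn Mkt S ν) :
    ∑ a ∈ S, u a (ν a) ≤ ∑ a ∈ S, q a := by
  obtain ⟨hinv, hS, hside⟩ := hν
  have key : ∑ a ∈ S, (u a (ν a) + u (ν a) a) ≤ ∑ a ∈ S, (q a + q (ν a)) := by
    apply Finset.sum_le_sum
    intro a _
    by_cases h : ν a = a
    · rw [h, hu a]
      have := hq a; linarith
    · rcases hside a h with ⟨h1, h2⟩ | ⟨h1, h2⟩
      · exact hblock a h1 (ν a) h2
      · have := hblock (ν a) h2 a h1; linarith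
  have e1 : ∑ a ∈ S, u (ν a) a = ∑ a ∈ S, u a (ν a) := by
    have : ∀ a ∈ S, u (ν a) a = (fun x => u x (ν x)) (ν a) := by
      intro a _; simp only []; rw [hinv a]
    rw [Finset.sum_congr rfl this]
    exact sum_comp_involution S ν hinv hS (fun x => u x (ν x))
  have e2 : ∑ a ∈ S, q (ν a) = ∑ a ∈ S, q a := sum_comp_involution S ν hinv hS q
  rw [Finset.sum_add_distrib, Finset.sum_add_distrib, e1, e2] at key
  linarith

lemma csb_matching (Apos B : Finset A) (f g : A → A)
    (hf : ∀ x ∈ Apos, ∀ y ∈ Apos, f x = f y → x = y)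
    (hg : ∀ x ∈ B, ∀ y ∈ B, g x = g y → x = y) :
    ∃ (A' : Finset A) (h : A → A),
      Apos ⊆ A' ∧ (∀ x ∈ A', ∀ y ∈ A', h x = h y → x = y) ∧
      (∀ b ∈ B, ∃ a ∈ A', h a = b) ∧
      (∀ a ∈ A', (a ∈ Apos ∧ h a = f a) ∨ (h a ∈ B ∧ g (h a) = a)) := by
  classical
  -- iterated "escaping" sets
  let step : Finset A → Finset A := fun C => Apos.filter (fun a => ∃ a' ∈ C, f a' ∈ B ∧ g (f a') = a)
  let Cn : ℕ → Finset A := fun n => step^[n] (Apos \ B.image g)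
  have hCn0 : Cn 0 = Apos \ B.image g := rfl
  have hCnS : ∀ n, Cn (n+1) = Apos.filter (fun a => ∃ a' ∈ Cn n, f a' ∈ B ∧ g (f a') = a) := by
    intro n
    show step^[n+1] _ = _
    rw [Function.iterate_succ_apply']
  have hCnsub : ∀ n, Cn n ⊆ Apos := by
    intro n
    cases n with
    | zero => rw [hCn0]; exact Finset.sdiff_subset
    | succ n => rw [hCnS]; exact Finset.filter_subset _ _
  let Cs : Finset A := Apos.filter (fun a => ∃ n, a ∈ Cn n)
  have hCsA : Cs ⊆ Apos := Finset.filter_subset _ _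
  have memCs : ∀ a, a ∈ Cs ↔ ∃ n, a ∈ Cn n := by
    intro a
    constructor
    · intro h; exact (Finset.mem_filter.mp h).2
    · rintro ⟨n, hn⟩; exact Finset.mem_filter.mpr ⟨hCnsub n hn, ⟨n, hn⟩⟩
  have hclosure : ∀ a ∈ Cs, f a ∈ B → g (f a) ∈ Apos → g (f a) ∈ Cs := by
    intro a ha hfa hga
    obtain ⟨n, hn⟩ := (memCs a).mp ha
    exact (memCs _).mpr ⟨n+1, by rw [hCnS]; exact Finset.mem_filter.mpr ⟨hga, a, hn, hfa, rfl⟩⟩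
  let B' : Finset A := B.filter (fun b => b ∉ Cs.image f)
  have hB'B : B' ⊆ B := Finset.filter_subset _ _
  let A' : Finset A := Cs ∪ B'.image g
  -- Cs and B'.image g are disjoint
  have hdisj : ∀ a ∈ Cs, a ∉ B'.image g := by
    intro a ha hmem
    obtain ⟨b, hb, hgb⟩ := Finset.mem_image.mp hmem
    obtain ⟨n, hn⟩ := (memCs a).mp ha
    cases n with
    | zero =>
      rw [hCn0] at hn
      exact (Finset.mem_sdiff.mp hn).2 (Finset.mem_image.mpr ⟨b, hB'B hb, hgb⟩)
    | succ n =>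
      rw [hCnS] at hn
      obtain ⟨_, a', ha', hfa', hgfa'⟩ := Finset.mem_filter.mp hn
      have hbmem := Finset.mem_filter.mp hb
      have : b = f a' := hg b hbmem.1 (f a') hfa' (by rw [hgb, hgfa'])
      exact hbmem.2 (Finset.mem_image.mpr ⟨a', (memCs a').mpr ⟨n, ha'⟩, this.symm⟩)
  -- the matching map
  let h : A → A := fun a => if a ∈ Cs then f a
    else if hb : ∃ b, b ∈ B' ∧ g b = a then hb.choose else a
  have hhCs : ∀ a ∈ Cs, h a = f a := fun a ha => by simp only [h, if_pos ha]
  have hhg : ∀ b ∈ B', h (g b) = b := by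
    intro b hb
    have h1 : g b ∉ Cs := fun hc => hdisj (g b) hc (Finset.mem_image.mpr ⟨b, hb, rfl⟩)
    have hex : ∃ b', b' ∈ B' ∧ g b' = g b := ⟨b, hb, rfl⟩
    simp only [h, if_neg h1, dif_pos hex]
    exact hg _ (hB'B hex.choose_spec.1) _ (hB'B hb) hex.choose_spec.2
  refine ⟨A', h, ?_, ?_, ?_, ?_⟩
  · -- Apos ⊆ A'
    intro a ha
    by_cases hc : a ∈ Cs
    · exact Finset.mem_union_left _ hc
    · have h0 : a ∉ Cn 0 := fun hn => hc ((memCs a).mpr ⟨0, hn⟩)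
      rw [hCn0, Finset.mem_sdiff] at h0
      push_neg at h0
      obtain ⟨b, hbB, hgb⟩ := Finset.mem_image.mp (h0 ha)
      have hbB' : b ∈ B' := by
        refine Finset.mem_filter.mpr ⟨hbB, fun hbf => ?_⟩
        obtain ⟨a', ha', hfa'⟩ := Finset.mem_image.mp hbf
        exact hc (by rw [← hgb, ← hfa']; exact hclosure a' ha' (hfa' ▸ hbB) (by rw [hfa', hgb]; exact ha))
      exact Finset.mem_union_right _ (Finset.mem_image.mpr ⟨b, hbB', hgb⟩)
  · -- injectivity of h on A'
    intro x hx y hy hxy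
    rcases Finset.mem_union.mp hx with hx1 | hx2 <;> rcases Finset.mem_union.mp hy with hy1 | hy2
    · exact hf x (hCsA hx1) y (hCsA hy1) (by rwa [hhCs x hx1, hhCs y hy1] at hxy)
    · obtain ⟨b, hb, hgb⟩ := Finset.mem_image.mp hy2
      exfalso
      have : h y = b := by rw [← hgb]; exact hhg b hb
      rw [hhCs x hx1, this] at hxy
      exact (Finset.mem_filter.mp hb).2 (Finset.mem_image.mpr ⟨x, hx1, hxy⟩)
    · obtain ⟨b, hb, hgb⟩ := Finset.mem_image.mp hx2
      exfalso
      have : h x = b := by rw [← hgb]; exact hhg b hb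
      rw [hhCs y hy1, this] at hxy
      exact (Finset.mem_filter.mp hb).2 (Finset.mem_image.mpr ⟨y, hy1, hxy.symm⟩)
    · obtain ⟨b, hb, hgb⟩ := Finset.mem_image.mp hx2
      obtain ⟨b', hb', hgb'⟩ := Finset.mem_image.mp hy2
      have e1 : h x = b := by rw [← hgb]; exact hhg b hb
      have e2 : h y = b' := by rw [← hgb']; exact hhg b' hb'
      rw [e1, e2] at hxy
      rw [← hgb, ← hgb', hxy]
  · -- B is covered
    intro b hb
    by_cases hbf : b ∈ Cs.image f
    · obtain ⟨a, ha, hfa⟩ := Finset.mem_image.mp hbf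
      exact ⟨a, Finset.mem_union_left _ ha, by rw [hhCs a ha, hfa]⟩
    · have hbB' : b ∈ B' := Finset.mem_filter.mpr ⟨hb, hbf⟩
      exact ⟨g b, Finset.mem_union_right _ (Finset.mem_image.mpr ⟨b, hbB', rfl⟩), hhg b hbB'⟩
  · -- structure of h
    intro a ha
    rcases Finset.mem_union.mp ha with h1 | h2
    · exact Or.inl ⟨hCsA h1, hhCs a h1⟩
    · obtain ⟨b, hb, hgb⟩ := Finset.mem_image.mp h2
      have : h a = b := by rw [← hgb]; exact hhg b hb
      exact Or.inr ⟨this ▸ hB'B hb, by rw [this, hgb]⟩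

lemma hall_side (X Y : Finset A) (hXY : Disjoint X Y)
    (cs : A → A → ℝ) (p s : A → ℝ)
    (hs0 : ∀ a, 0 ≤ s a) (hq0 : ∀ a, 0 ≤ p a + s a)
    (hcon : ∀ x ∈ X, ∀ y ∈ Y, cs x y ≤ (p x + s x) + (p y + s y))
    (hmin : ∀ t : A → ℝ, (∀ a, 0 ≤ t a) → (∀ a, 0 ≤ p a + t a) →
      (∀ x ∈ X, ∀ y ∈ Y, cs x y ≤ (p x + t x) + (p y + t y)) → ∑ a, s a ≤ ∑ a, t a)
    (D : Finset A) (hD : D ⊆ X.filter (fun a => 0 < s a ∧ 0 < p a + s a)) :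
    D.card ≤ (D.biUnion (fun x => Y.filter (fun y => cs x y = (p x + s x) + (p y + s y)))).card := by
  classical
  by_contra hcard
  push_neg at hcard
  set N := D.biUnion (fun x => Y.filter (fun y => cs x y = (p x + s x) + (p y + s y))) with hN
  have hDX : D ⊆ X := hD.trans (Finset.filter_subset _ _)
  have hDpos : ∀ a ∈ D, 0 < s a ∧ 0 < p a + s a := fun a ha => (Finset.mem_filter.mp (hD ha)).2
  have hNY : N ⊆ Y := by
    intro y hy
    obtain ⟨x, _, hy'⟩ := Finset.mem_biUnion.mp hy
    exact (Finset.mem_filter.mp hy').1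
  have hDne : D.Nonempty := by
    rw [← Finset.card_pos]
    exact lt_of_le_of_lt (Nat.zero_le _) hcard
  -- the perturbation size
  let E1 := D.image s
  let E2 := D.image (fun a => p a + s a)
  let E3 := ((D ×ˢ Y).filter (fun z => ¬ cs z.1 z.2 = (p z.1 + s z.1) + (p z.2 + s z.2))).image
      (fun z => (p z.1 + s z.1) + (p z.2 + s z.2) - cs z.1 z.2)
  let Et := E1 ∪ E2 ∪ E3
  have hEtne : Et.Nonempty := by
    obtain ⟨a, ha⟩ := hDne
    refine ⟨s a, ?_⟩
    simp only [Et, Finset.mem_union]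
    exact Or.inl (Or.inl (Finset.mem_image.mpr ⟨a, ha, rfl⟩))
  set ε := Et.min' hEtne with hε
  have hεpos : 0 < ε := by
    rw [Finset.lt_min'_iff]
    intro y hy
    simp only [Et, Finset.mem_union] at hy
    rcases hy with (hy | hy) | hy
    · obtain ⟨a, ha, rfl⟩ := Finset.mem_image.mp hy
      exact (hDpos a ha).1
    · obtain ⟨a, ha, rfl⟩ := Finset.mem_image.mp hy
      exact (hDpos a ha).2
    · obtain ⟨z, hz, rfl⟩ := Finset.mem_image.mp hy
      obtain ⟨hz1, hz2⟩ := Finset.mem_filter.mp hz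
      obtain ⟨hzD, hzY⟩ := Finset.mem_product.mp hz1
      have := hcon z.1 (hDX hzD) z.2 hzY
      rcases lt_or_eq_of_le this with hlt | heq
      · linarith
      · exact absurd heq hz2
  have hεs : ∀ a ∈ D, ε ≤ s a := fun a ha => Finset.min'_le _ _
    (by simp only [Et, Finset.mem_union]; left; left; exact Finset.mem_image.mpr ⟨a, ha, rfl⟩)
  have hεq : ∀ a ∈ D, ε ≤ p a + s a := fun a ha => Finset.min'_le _ _
    (by simp only [Et, Finset.mem_union]; left; right; exact Finset.mem_image.mpr ⟨a, ha, rfl⟩)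
  have hεslack : ∀ x ∈ D, ∀ y ∈ Y, cs x y ≠ (p x + s x) + (p y + s y) →
      ε ≤ (p x + s x) + (p y + s y) - cs x y := by
    intro x hx y hy hne
    apply Finset.min'_le
    simp only [Et, Finset.mem_union]
    right
    exact Finset.mem_image.mpr ⟨(x, y), Finset.mem_filter.mpr
      ⟨Finset.mem_product.mpr ⟨hx, hy⟩, hne⟩, rfl⟩
  -- the perturbed subsidy
  let t : A → ℝ := fun a => if a ∈ D then s a - ε else if a ∈ N then s a + ε else s a
  have htD : ∀ a ∈ D, t a = s a - ε := fun a ha => by simp only [t, if_pos ha]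
  have htN : ∀ a ∈ N, t a = s a + ε := by
    intro a ha
    have : a ∉ D := fun hD' => (Finset.disjoint_left.mp hXY (hDX hD')) (hNY ha)
    simp only [t, if_neg this, if_pos ha]
  have htelse : ∀ a, a ∉ D → a ∉ N → t a = s a := by
    intro a h1 h2; simp only [t, if_neg h1, if_neg h2]
  have hts : ∀ a, a ∉ D → s a ≤ t a := by
    intro a h1
    by_cases h2 : a ∈ N
    · rw [htN a h2]; linarith
    · rw [htelse a h1 h2]
  have ht0 : ∀ a, 0 ≤ t a := by
    intro a
    by_cases h1 : a ∈ D
    · rw [htD a h1]; have := hεs a h1; linarith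
    · exact le_trans (hs0 a) (hts a h1)
  have htq : ∀ a, 0 ≤ p a + t a := by
    intro a
    by_cases h1 : a ∈ D
    · rw [htD a h1]; have := hεq a h1; linarith
    · have := hts a h1; have := hq0 a; linarith
  have htcon : ∀ x ∈ X, ∀ y ∈ Y, cs x y ≤ (p x + t x) + (p y + t y) := by
    intro x hx y hy
    have hyD : y ∉ D := fun h => (Finset.disjoint_left.mp hXY (hDX h)) hy
    have hyt : s y ≤ t y := hts y hyD
    by_cases hxD : x ∈ D
    · rw [htD x hxD]
      by_cases htight : cs x y = (p x + s x) + (p y + s y)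
      · have hyN : y ∈ N := Finset.mem_biUnion.mpr ⟨x, hxD, Finset.mem_filter.mpr ⟨hy, htight⟩⟩
        rw [htN y hyN]; linarith
      · have := hεslack x hxD y hy htight; linarith
    · have : t x = s x := by
        have hxN : x ∉ N := fun h => (Finset.disjoint_left.mp hXY hx) (hNY h)
        exact htelse x hxD hxN
      rw [this]
      have := hcon x hx y hy; linarith
  -- total sum strictly decreases: contradiction
  have hsum : ∑ a, t a < ∑ a, s a := by
    have hdiff : ∑ a, (t a - s a) = ∑ a ∈ D ∪ N, (t a - s a) := by
      symm
      apply Finset.sum_subset (Finset.subset_univ _)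
      intro a _ ha
      rw [Finset.mem_union] at ha
      push_neg at ha
      rw [htelse a ha.1 ha.2, sub_self]
    have hDN : Disjoint D N := Finset.disjoint_left.mpr
      (fun a ha hna => (Finset.disjoint_left.mp hXY (hDX ha)) (hNY hna))
    rw [Finset.sum_union hDN] at hdiff
    have e1 : ∑ a ∈ D, (t a - s a) = -(D.card • ε) := by
      rw [← Finset.sum_const]
      rw [← Finset.sum_neg_distrib]
      apply Finset.sum_congr rfl
      intro a ha; rw [htD a ha]; ring
    have e2 : ∑ a ∈ N, (t a - s a) = N.card • ε := by
      rw [← Finset.sum_const]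
      apply Finset.sum_congr rfl
      intro a ha; rw [htN a ha]; ring
    have : ∑ a, (t a - s a) < 0 := by
      rw [hdiff, e1, e2]
      simp only [nsmul_eq_mul]
      have : (N.card : ℝ) < D.card := by exact_mod_cast hcard
      nlinarith
    have := Finset.sum_sub_distrib (s := Finset.univ) (f := t) (g := s)
    linarith [this ▸ ‹∑ a, (t a - s a) < 0›]
  exact absurd (hmin t ht0 htq htcon) (not_le.mpr hsum)

lemma id_matching (Mkt : TwoSidedMarket A) (S : Finset A) : IsMatchingOn Mkt S id :=
  ⟨fun _ => rfl, fun _ h => absurd rfl h, fun _ h => absurd rfl h⟩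

/-- there is a nonnegative subsidy vector with total equal to the
Subset Instability that stabilizes the outcome. -/
theorem exists_stabilizing_subsidy
    (Mkt : TwoSidedMarket A) (u : A → A → ℝ) (μ : A → A) (τ : A → ℝ)
    (hu : ∀ a, u a a = 0)
    (hμ : IsMatchingOn Mkt Finset.univ μ)
    (hτ : ZeroSum μ τ) :
    ∃ s : A → ℝ, (∀ a, 0 ≤ s a) ∧ (∑ a, s a) = instability Mkt u μ τ ∧
      Stable Mkt u μ (fun a => τ a + s a) := by
  classical
  set p : A → ℝ := fun a => u a (μ a) + τ a with hp
  -- ==== a big constant ====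
  set K : ℝ := 1 + (∑ a, |p a|) + ∑ m ∈ Mkt.M, ∑ w ∈ Mkt.W, |u m w + u w m| with hKdef
  have habs1 : ∀ a, |p a| ≤ ∑ b, |p b| :=
    fun a => Finset.single_le_sum (f := fun b => |p b|) (fun b _ => abs_nonneg _) (Finset.mem_univ a)
  have habsnn : (0:ℝ) ≤ ∑ a, |p a| := Finset.sum_nonneg (fun a _ => abs_nonneg _)
  have hcsnn : (0:ℝ) ≤ ∑ m ∈ Mkt.M, ∑ w ∈ Mkt.W, |u m w + u w m| :=
    Finset.sum_nonneg fun m _ => Finset.sum_nonneg fun w _ => abs_nonneg _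
  have habs2 : ∀ m ∈ Mkt.M, ∀ w ∈ Mkt.W,
      |u m w + u w m| ≤ ∑ m' ∈ Mkt.M, ∑ w' ∈ Mkt.W, |u m' w' + u w' m'| := by
    intro m hm w hw
    calc |u m w + u w m| ≤ ∑ w' ∈ Mkt.W, |u m w' + u w' m| :=
          Finset.single_le_sum (f := fun w' => |u m w' + u w' m|) (fun b _ => abs_nonneg _) hw
      _ ≤ _ := Finset.single_le_sum
          (f := fun m' => ∑ w' ∈ Mkt.W, |u m' w' + u w' m'|)
          (fun b _ => Finset.sum_nonneg fun w' _ => abs_nonneg _) hm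
  have habs3 : ∀ m ∈ Mkt.M, ∀ w ∈ Mkt.W, |p m| + |p w| ≤ ∑ a, |p a| := by
    intro m hm w hw
    have hmw : m ≠ w := fun h => Finset.disjoint_left.mp Mkt.disj hm (h ▸ hw)
    have : ∑ a ∈ {m, w}, |p a| ≤ ∑ a, |p a| :=
      Finset.sum_le_sum_of_subset_of_nonneg (Finset.subset_univ _)
        (fun a _ _ => abs_nonneg _)
    rwa [Finset.sum_pair hmw] at this
  have hK1 : ∀ a, |p a| + 1 ≤ K := by intro a; have := habs1 a; rw [hKdef]; linarith
  have hK2 : ∀ m ∈ Mkt.M, ∀ w ∈ Mkt.W, |p m| + |p w| + |u m w + u w m| + 1 ≤ K := by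
    intro m hm w hw
    have := habs3 m hm w hw; have := habs2 m hm w hw
    rw [hKdef]; linarith
  have hK0 : (0:ℝ) ≤ K := by rw [hKdef]; linarith
  -- ==== the feasible set and minimizer ====
  set Cset : Set (A → ℝ) := {t | (∀ a, 0 ≤ t a) ∧ (∀ a, 0 ≤ p a + t a) ∧
    ∀ m ∈ Mkt.M, ∀ w ∈ Mkt.W, u m w + u w m ≤ (p m + t m) + (p w + t w)} with hCsetdef
  have hclosed : IsClosed Cset := by
    have hrw : Cset = (⋂ a, {t : A → ℝ | 0 ≤ t a}) ∩ ((⋂ a, {t : A → ℝ | 0 ≤ p a + t a}) ∩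
        (⋂ m, ⋂ (_ : m ∈ Mkt.M), ⋂ w, ⋂ (_ : w ∈ Mkt.W),
          {t : A → ℝ | u m w + u w m ≤ (p m + t m) + (p w + t w)})) := by
      ext t
      simp only [hCsetdef, Set.mem_setOf_eq, Set.mem_inter_iff, Set.mem_iInter]
    rw [hrw]
    refine IsClosed.inter ?_ (IsClosed.inter ?_ ?_)
    · exact isClosed_iInter fun a => isClosed_le continuous_const (continuous_apply a)
    · exact isClosed_iInter fun a =>
        isClosed_le continuous_const (continuous_const.add (continuous_apply a))
    · refine isClosed_iInter fun m => isClosed_iInter fun _ =>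
        isClosed_iInter fun w => isClosed_iInter fun _ => ?_
      exact isClosed_le continuous_const
        ((continuous_const.add (continuous_apply m)).add
          (continuous_const.add (continuous_apply w)))
  set Box : Set (A → ℝ) := Set.Icc (fun _ => 0) (fun _ => K) with hBoxdef
  have hKC : (fun _ => K) ∈ Box ∩ Cset := by
    constructor
    · exact Set.mem_Icc.mpr ⟨fun a => hK0, fun a => le_refl K⟩
    · refine ⟨fun a => hK0, fun a => ?_, fun m hm w hw => ?_⟩
      · have := hK1 a; have := neg_abs_le (p a); linarith
      · have := hK2 m hm w hw
        have h1 := neg_abs_le (p m); have h2 := neg_abs_le (p w)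
        have h3 := le_abs_self (u m w + u w m)
        linarith
  have htrunc : ∀ t ∈ Cset, (fun a => min (t a) K) ∈ Box ∩ Cset ∧
      ∑ a, min (t a) K ≤ ∑ a, t a := by
    intro t ht
    obtain ⟨ht0, htq, htb⟩ := ht
    have hmin0 : ∀ a, 0 ≤ min (t a) K := fun a => le_min (ht0 a) hK0
    have hminq : ∀ a, 0 ≤ p a + min (t a) K := by
      intro a
      rcases min_cases (t a) K with ⟨h, _⟩ | ⟨h, _⟩
      · rw [h]; exact htq a
      · rw [h]; have := hK1 a; have := neg_abs_le (p a); linarith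
    refine ⟨⟨Set.mem_Icc.mpr ⟨fun a => hmin0 a, fun a => min_le_right _ _⟩,
        hmin0, hminq, ?_⟩, Finset.sum_le_sum fun a _ => min_le_left _ _⟩
    intro m hm w hw
    dsimp only
    have hKm := hK2 m hm w hw
    have h1 := neg_abs_le (p m); have h2 := neg_abs_le (p w)
    have h3 := le_abs_self (u m w + u w m)
    have h4 := abs_nonneg (p m); have h5 := abs_nonneg (p w)
    rcases min_cases (t m) K with ⟨hem, _⟩ | ⟨hem, hlm⟩ <;>
      rcases min_cases (t w) K with ⟨hew, _⟩ | ⟨hew, hlw⟩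
    · rw [hem, hew]; exact htb m hm w hw
    · rw [hem, hew]
      have := htq m; linarith
    · rw [hem, hew]
      have := htq w; linarith
    · rw [hem, hew]; linarith
  have hcompact : IsCompact (Box ∩ Cset) := by
    have : IsCompact Box := isCompact_Icc
    exact this.inter_right hclosed
  have hcont : Continuous (fun t : A → ℝ => ∑ a, t a) :=
    continuous_finset_sum _ (fun a _ => continuous_apply a)
  obtain ⟨s, hsmem, hsminon⟩ :=
    hcompact.exists_isMinOn ⟨(fun _ => K), hKC⟩ hcont.continuousOn
  have hgmin : ∀ t ∈ Cset, ∑ a, s a ≤ ∑ a, t a := by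
    intro t ht
    have h1 := isMinOn_iff.mp hsminon _ (htrunc t ht).1
    exact le_trans h1 (htrunc t ht).2
  obtain ⟨hs0, hq0, hbl⟩ := hsmem.2
  -- notation
  set cs : A → A → ℝ := fun a b => u a b + u b a with hcsdef
  set PM := Mkt.M.filter (fun a => 0 < s a ∧ 0 < p a + s a) with hPMdef
  set PW := Mkt.W.filter (fun a => 0 < s a ∧ 0 < p a + s a) with hPWdef
  -- ==== Hall conditions ====
  have hallM : ∀ D : Finset A, D ⊆ PM → D.card ≤
      (D.biUnion (fun x => Mkt.W.filter (fun y => cs x y = (p x + s x) + (p y + s y)))).card := by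
    intro D hDsub
    exact hall_side Mkt.M Mkt.W Mkt.disj cs p s hs0 hq0
      (fun x hx y hy => hbl x hx y hy)
      (fun t h1 h2 h3 => hgmin t ⟨h1, h2, h3⟩) D hDsub
  have hallW : ∀ D : Finset A, D ⊆ PW → D.card ≤
      (D.biUnion (fun x => Mkt.M.filter (fun y => cs x y = (p x + s x) + (p y + s y)))).card := by
    intro D hDsub
    refine hall_side Mkt.W Mkt.M Mkt.disj.symm cs p s hs0 hq0 ?_ ?_ D hDsub
    · intro x hx y hy
      have := hbl y hy x hx
      simp only [hcsdef]; linarith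
    · intro t h1 h2 h3
      refine hgmin t ⟨h1, h2, fun m hm w hw => ?_⟩
      have := h3 w hw m hm
      simp only [hcsdef] at this; linarith
  -- ==== Hall's theorem: injections along tight edges ====
  obtain ⟨f0, hf0inj, hf0mem⟩ := (Finset.all_card_le_biUnion_card_iff_exists_injective
      (fun x : {a // a ∈ PM} =>
        Mkt.W.filter (fun y => cs x.1 y = (p x.1 + s x.1) + (p y + s y)))).mp (by
    intro s'
    have hcard : s'.card = (s'.image Subtype.val).card :=
      (Finset.card_image_of_injective _ Subtype.val_injective).symm
    have hbi : s'.biUnion (fun x : {a // a ∈ PM} =>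
        Mkt.W.filter (fun y => cs x.1 y = (p x.1 + s x.1) + (p y + s y))) =
        (s'.image Subtype.val).biUnion
          (fun x => Mkt.W.filter (fun y => cs x y = (p x + s x) + (p y + s y))) := by
      ext y
      simp only [Finset.mem_biUnion, Finset.mem_image]
      constructor
      · rintro ⟨x, hx, hy⟩; exact ⟨x.1, ⟨x, hx, rfl⟩, hy⟩
      · rintro ⟨a, ⟨x, hx, rfl⟩, hy⟩; exact ⟨x, hx, hy⟩
    rw [hcard, hbi]
    exact hallM _ (by
      intro a ha
      obtain ⟨x, _, rfl⟩ := Finset.mem_image.mp ha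
      exact x.2))
  obtain ⟨g0, hg0inj, hg0mem⟩ := (Finset.all_card_le_biUnion_card_iff_exists_injective
      (fun x : {a // a ∈ PW} =>
        Mkt.M.filter (fun y => cs x.1 y = (p x.1 + s x.1) + (p y + s y)))).mp (by
    intro s'
    have hcard : s'.card = (s'.image Subtype.val).card :=
      (Finset.card_image_of_injective _ Subtype.val_injective).symm
    have hbi : s'.biUnion (fun x : {a // a ∈ PW} =>
        Mkt.M.filter (fun y => cs x.1 y = (p x.1 + s x.1) + (p y + s y))) =
        (s'.image Subtype.val).biUnion
          (fun x => Mkt.M.filter (fun y => cs x y = (p x + s x) + (p y + s y))) := by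
      ext y
      simp only [Finset.mem_biUnion, Finset.mem_image]
      constructor
      · rintro ⟨x, hx, hy⟩; exact ⟨x.1, ⟨x, hx, rfl⟩, hy⟩
      · rintro ⟨a, ⟨x, hx, rfl⟩, hy⟩; exact ⟨x, hx, hy⟩
    rw [hcard, hbi]
    exact hallW _ (by
      intro a ha
      obtain ⟨x, _, rfl⟩ := Finset.mem_image.mp ha
      exact x.2))
  set f : A → A := fun a => if h : a ∈ PM then f0 ⟨a, h⟩ else a with hfdef
  set g : A → A := fun a => if h : a ∈ PW then g0 ⟨a, h⟩ else a with hgdef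
  have hff : ∀ a ∈ PM, f a ∈ Mkt.W ∧ cs a (f a) = (p a + s a) + (p (f a) + s (f a)) := by
    intro a ha
    have := hf0mem ⟨a, ha⟩
    rw [Finset.mem_filter] at this
    simp only [hfdef, dif_pos ha]
    exact this
  have hgg : ∀ a ∈ PW, g a ∈ Mkt.M ∧ cs a (g a) = (p a + s a) + (p (g a) + s (g a)) := by
    intro a ha
    have := hg0mem ⟨a, ha⟩
    rw [Finset.mem_filter] at this
    simp only [hgdef, dif_pos ha]
    exact this
  have hfinj : ∀ x ∈ PM, ∀ y ∈ PM, f x = f y → x = y := by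
    intro x hx y hy hxy
    simp only [hfdef, dif_pos hx, dif_pos hy] at hxy
    have := hf0inj hxy
    exact congrArg Subtype.val this
  have hginj : ∀ x ∈ PW, ∀ y ∈ PW, g x = g y → x = y := by
    intro x hx y hy hxy
    simp only [hgdef, dif_pos hx, dif_pos hy] at hxy
    have := hg0inj hxy
    exact congrArg Subtype.val this
  -- ==== CSB: a tight matching covering PM and PW ====
  obtain ⟨A', h, hsubA', hinjA', hcoverB, hstruct⟩ := csb_matching PM PW f g hfinj hginj
  have hPMM : PM ⊆ Mkt.M := Finset.filter_subset _ _
  have hPWW : PW ⊆ Mkt.W := Finset.filter_subset _ _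
  have hA'M : ∀ a ∈ A', a ∈ Mkt.M := by
    intro a ha
    rcases hstruct a ha with ⟨h1, _⟩ | ⟨h1, h2⟩
    · exact hPMM h1
    · rw [← h2]; exact (hgg (h a) h1).1
  have hhW : ∀ a ∈ A', h a ∈ Mkt.W := by
    intro a ha
    rcases hstruct a ha with ⟨h1, h2⟩ | ⟨h1, _⟩
    · rw [h2]; exact (hff a h1).1
    · exact hPWW h1
  have htightA' : ∀ a ∈ A',
      u a (h a) + u (h a) a = (p a + s a) + (p (h a) + s (h a)) := by
    intro a ha
    rcases hstruct a ha with ⟨h1, h2⟩ | ⟨h1, h2⟩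
    · have := (hff a h1).2
      rw [h2]
      simpa only [hcsdef] using this
    · have := (hgg (h a) h1).2
      rw [h2] at this
      simp only [hcsdef] at this
      linarith
  -- ==== the final subset and matching ====
  set S0 := Finset.univ.filter (fun a => 0 < s a ∧ p a + s a = 0) with hS0def
  set prs : Finset A := A' ∪ A'.image h with hprsdef
  set S : Finset A := prs ∪ S0 with hSdef
  have hdisjA' : Disjoint A' (A'.image h) := by
    rw [Finset.disjoint_left]
    intro a ha hmem
    obtain ⟨b, hb, hba⟩ := Finset.mem_image.mp hmem
    exact Finset.disjoint_left.mp Mkt.disj (hA'M a ha) (hba ▸ hhW b hb)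
  set ν : A → A := fun a => if ha : a ∈ A' then h a
    else if hb : ∃ b, b ∈ A' ∧ h b = a then hb.choose else a with hνdef
  have hν1 : ∀ a ∈ A', ν a = h a := fun a ha => by simp only [hνdef, dif_pos ha]
  have hν2 : ∀ a ∈ A', ν (h a) = a := by
    intro a ha
    have hna : h a ∉ A' := fun hmem =>
      Finset.disjoint_left.mp Mkt.disj (hA'M _ hmem) (hhW a ha)
    have hex : ∃ b, b ∈ A' ∧ h b = h a := ⟨a, ha, rfl⟩
    simp only [hνdef, dif_neg hna, dif_pos hex]
    exact hinjA' _ hex.choose_spec.1 _ ha hex.choose_spec.2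
  have hν3 : ∀ a, a ∉ A' → ¬(∃ b, b ∈ A' ∧ h b = a) → ν a = a := by
    intro a h1 h2; simp only [hνdef, dif_neg h1, dif_neg h2]
  have hνim : ∀ a, a ∉ A' → (hex : ∃ b, b ∈ A' ∧ h b = a) →
      ν a ∈ A' ∧ h (ν a) = a := by
    intro a h1 hex
    simp only [hνdef, dif_neg h1, dif_pos hex]
    exact hex.choose_spec
  have hmatch : IsMatchingOn Mkt S ν := by
    refine ⟨?_, ?_, ?_⟩
    · intro a
      by_cases ha : a ∈ A'
      · rw [hν1 a ha]; exact hν2 a ha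
      · by_cases hex : ∃ b, b ∈ A' ∧ h b = a
        · obtain ⟨hν, hh⟩ := hνim a ha hex
          have := hν1 _ hν
          rw [this, hh]
        · rw [hν3 a ha hex, hν3 a ha hex]
    · intro a hne
      by_cases ha : a ∈ A'
      · exact Finset.mem_union_left _ (Finset.mem_union_left _ ha)
      · by_cases hex : ∃ b, b ∈ A' ∧ h b = a
        · obtain ⟨b, hb, hba⟩ := hex
          exact Finset.mem_union_left _ (Finset.mem_union_right _
            (Finset.mem_image.mpr ⟨b, hb, hba⟩))
        · exact absurd (hν3 a ha hex) hne
    · intro a hne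
      by_cases ha : a ∈ A'
      · rw [hν1 a ha]
        exact Or.inl ⟨hA'M a ha, hhW a ha⟩
      · by_cases hex : ∃ b, b ∈ A' ∧ h b = a
        · obtain ⟨hν, hh⟩ := hνim a ha hex
          have hw := hhW _ hν
          rw [hh] at hw
          exact Or.inr ⟨hw, hA'M _ hν⟩
        · exact absurd (hν3 a ha hex) hne
  -- ==== sum identity on S ====
  have hsum_pairs : ∀ G : A → ℝ, ∑ a ∈ prs, G a = ∑ a ∈ A', (G a + G (h a)) := by
    intro G
    rw [hprsdef, Finset.sum_union hdisjA', Finset.sum_image (fun x hx y hy => hinjA' x hx y hy),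
      Finset.sum_add_distrib]
  have hS0q : ∀ a ∈ S0, a ∉ prs → ν a = a ∧ p a + s a = 0 := by
    intro a ha hnp
    have h1 : a ∉ A' := fun hmem => hnp (Finset.mem_union_left _ hmem)
    have h2 : ¬ ∃ b, b ∈ A' ∧ h b = a := by
      rintro ⟨b, hb, hba⟩
      exact hnp (Finset.mem_union_right _ (Finset.mem_image.mpr ⟨b, hb, hba⟩))
    exact ⟨hν3 a h1 h2, (Finset.mem_filter.mp ha).2.2⟩
  have hSsplit : S = prs ∪ (S0 \ prs) := by
    rw [hSdef, Finset.union_sdiff_self_eq_union]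
  have hSdisj : Disjoint prs (S0 \ prs) := Finset.disjoint_sdiff
  have hmain_eq : ∑ a ∈ S, u a (ν a) = ∑ a ∈ S, (p a + s a) := by
    rw [hSsplit, Finset.sum_union hSdisj, Finset.sum_union hSdisj]
    have e1 : ∑ a ∈ prs, u a (ν a) = ∑ a ∈ prs, (p a + s a) := by
      rw [hsum_pairs (fun a => u a (ν a)), hsum_pairs (fun a => p a + s a)]
      apply Finset.sum_congr rfl
      intro a ha
      rw [hν1 a ha, hν2 a ha]
      exact htightA' a ha
    have e2 : ∑ a ∈ S0 \ prs, u a (ν a) = ∑ a ∈ S0 \ prs, (p a + s a) := by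
      apply Finset.sum_congr rfl
      intro a ha
      obtain ⟨ha0, hnp⟩ := Finset.mem_sdiff.mp ha
      obtain ⟨hνa, hq⟩ := hS0q a ha0 hnp
      rw [hνa, hu a, hq]
    rw [e1, e2]
  -- ==== s vanishes outside S ====
  have hs_out : ∀ a, a ∉ S → s a = 0 := by
    intro a haS
    by_contra hne
    have hpos : 0 < s a := lt_of_le_of_ne (hs0 a) (Ne.symm hne)
    rcases lt_or_eq_of_le (hq0 a) with hq | hq
    · have haMW : a ∈ Mkt.M ∪ Mkt.W := by rw [Mkt.cover]; exact Finset.mem_univ a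
      rcases Finset.mem_union.mp haMW with hm | hw
      · have : a ∈ PM := Finset.mem_filter.mpr ⟨hm, hpos, hq⟩
        exact haS (Finset.mem_union_left _ (Finset.mem_union_left _ (hsubA' this)))
      · have haPW : a ∈ PW := Finset.mem_filter.mpr ⟨hw, hpos, hq⟩
        obtain ⟨b, hb, hba⟩ := hcoverB a haPW
        exact haS (Finset.mem_union_left _ (Finset.mem_union_right _
          (Finset.mem_image.mpr ⟨b, hb, hba⟩)))
    · have : a ∈ S0 := Finset.mem_filter.mpr ⟨Finset.mem_univ a, hpos, hq.symm⟩
      exact haS (Finset.mem_union_right _ this)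
  have hs_S : ∑ a ∈ S, s a = ∑ a, s a := by
    symm
    apply (Finset.sum_subset (Finset.subset_univ S) _).symm
    intro a _ haS
    exact hs_out a haS
  -- ==== maxWeight bounds ====
  have hblq : ∀ m ∈ Mkt.M, ∀ w ∈ Mkt.W,
      u m w + u w m ≤ (p m + s m) + (p w + s w) := hbl
  have hmw_ne : ∀ T : Finset A,
      {x | ∃ ν', IsMatchingOn Mkt T ν' ∧ x = ∑ a ∈ T, u a (ν' a)}.Nonempty := by
    intro T
    exact ⟨∑ a ∈ T, u a (id a), id, id_matching Mkt T, rfl⟩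
  have hmw_bdd : ∀ T : Finset A,
      ∀ x ∈ {x | ∃ ν', IsMatchingOn Mkt T ν' ∧ x = ∑ a ∈ T, u a (ν' a)},
      x ≤ ∑ a ∈ T, (p a + s a) := by
    rintro T x ⟨ν', hν', rfl⟩
    exact matching_sum_le Mkt u (fun a => p a + s a) hq0 hu hblq T ν' hν'
  have hmw_le : ∀ T : Finset A, maxWeight Mkt u T ≤ ∑ a ∈ T, (p a + s a) :=
    fun T => csSup_le (hmw_ne T) (hmw_bdd T)
  have hmw_ge : maxWeight Mkt u S ≥ ∑ a ∈ S, (p a + s a) := by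
    apply le_csSup
    · exact ⟨∑ a ∈ S, (p a + s a), hmw_bdd S⟩
    · exact ⟨ν, hmatch, hmain_eq.symm⟩
  -- ==== instability = ∑ s ====
  have hinst_mem : ∀ T : Finset A,
      maxWeight Mkt u T - ∑ a ∈ T, p a ∈
        {x | ∃ T' : Finset A, x = maxWeight Mkt u T' - ∑ a ∈ T', (u a (μ a) + τ a)} :=
    fun T => ⟨T, rfl⟩
  have hinst_bdd : ∀ x ∈ {x | ∃ T : Finset A,
      x = maxWeight Mkt u T - ∑ a ∈ T, (u a (μ a) + τ a)}, x ≤ ∑ a, s a := by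
    rintro x ⟨T, rfl⟩
    have h1 : maxWeight Mkt u T ≤ ∑ a ∈ T, (p a + s a) := hmw_le T
    have h2 : ∑ a ∈ T, (p a + s a) = ∑ a ∈ T, p a + ∑ a ∈ T, s a :=
      Finset.sum_add_distrib
    have h3 : ∑ a ∈ T, s a ≤ ∑ a, s a :=
      Finset.sum_le_sum_of_subset_of_nonneg (Finset.subset_univ T) (fun a _ _ => hs0 a)
    have hpe : ∑ a ∈ T, (u a (μ a) + τ a) = ∑ a ∈ T, p a := rfl
    rw [hpe]
    linarith
  have hinst : instability Mkt u μ τ = ∑ a, s a := by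
    rw [instability]
    apply le_antisymm
    · exact csSup_le ⟨maxWeight Mkt u ∅ - ∑ a ∈ (∅ : Finset A), (u a (μ a) + τ a),
        ⟨∅, rfl⟩⟩ hinst_bdd
    · have hmem : maxWeight Mkt u S - ∑ a ∈ S, (u a (μ a) + τ a) ∈
          {x | ∃ T : Finset A, x = maxWeight Mkt u T - ∑ a ∈ T, (u a (μ a) + τ a)} :=
        ⟨S, rfl⟩
      have hle : ∑ a, s a ≤ maxWeight Mkt u S - ∑ a ∈ S, (u a (μ a) + τ a) := by
        have h2 : ∑ a ∈ S, (p a + s a) = ∑ a ∈ S, p a + ∑ a ∈ S, s a :=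
          Finset.sum_add_distrib
        have hpe : ∑ a ∈ S, (u a (μ a) + τ a) = ∑ a ∈ S, p a := rfl
        rw [hpe]
        rw [← hs_S]
        linarith [hmw_ge]
      exact le_trans hle (le_csSup ⟨∑ a, s a, hinst_bdd⟩ hmem)
  refine ⟨s, hs0, hinst.symm, ?_, ?_⟩
  · intro a
    have := hq0 a
    simp only [hp] at this
    dsimp only
    linarith
  · intro m hm w hw
    have := hbl m hm w hw
    simp only [hp] at this
    dsimp only
    linarith
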